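/- For points P_i = (x_i, x_i^2) and P_j = (x_j, x_j^2) on the parabola y = x^2 with x_i, x_j rational and distinct, the Euclidean distance between P_i and P_j is rational if and only if there exists a Pythagorean triplet (α, β, γ) with α, β nonzero integers and γ a positive integer satisfying α² + β² = γ², such that x_i + x_j = β/α. -/

import Mathlib

theorem stmt_0 (xi xj : ℚ) (hne : xi ≠ xj) :
    (∃ q : ℚ, Real.sqrt (((xj : ℝ) - xi)^2 + ((xj : ℝ)^2 - (xi : ℝ)^2)^2) = q) ↔
      (xi + xj = 0 ∨ ∃ α β γ : ℤ, α ≠ 0 ∧ β ≠ 0 ∧ 0 < γ ∧ α^2 + β^2 = γ^2 ∧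
        xi + xj = (β : ℚ) / α) := by
  set s : ℚ := xi + xj with hs
  set d : ℚ := xj - xi with hd
  have hd0 : d ≠ 0 := sub_ne_zero.mpr (Ne.symm hne)
  have hdR : (d:ℝ) ≠ 0 := by exact_mod_cast hd0
  have key : ((xj : ℝ) - xi)^2 + ((xj : ℝ)^2 - (xi : ℝ)^2)^2
      = (d:ℝ)^2 * (1 + (s:ℝ)^2) := by push_cast [hs, hd]; ring
  have hsplit : Real.sqrt ((d:ℝ)^2 * (1 + (s:ℝ)^2))
      = |(d:ℝ)| * Real.sqrt (1 + (s:ℝ)^2) := by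
    rw [Real.sqrt_mul (sq_nonneg _), Real.sqrt_sq_eq_abs]
  rw [key]
  constructor
  · rintro ⟨q, hq⟩
    by_cases hs0 : s = 0
    · exact Or.inl hs0
    right
    set r : ℚ := q / |d| with hr
    have habs : |(d:ℝ)| ≠ 0 := abs_ne_zero.mpr hdR
    have hr2 : Real.sqrt (1 + (s:ℝ)^2) = (r:ℝ) := by
      rw [hsplit] at hq
      rw [hr]
      push_cast
      field_simp at hq ⊢
      linarith [hq]
    have hrsq : (r:ℚ)^2 = 1 + s^2 := by
      have := Real.sq_sqrt (by positivity : (0:ℝ) ≤ 1 + (s:ℝ)^2)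
      rw [hr2] at this
      exact_mod_cast this
    have hrpos : 0 < r := by
      have h1 : (0:ℝ) ≤ (r:ℝ) := hr2 ▸ Real.sqrt_nonneg _
      have h2 : r ≠ 0 := by
        intro h; rw [h] at hrsq; nlinarith [sq_nonneg s]
      have : (0:ℚ) ≤ r := by exact_mod_cast h1
      exact lt_of_le_of_ne this (Ne.symm h2)
    set t : ℚ := r * s.den with ht
    have hden : (s.den : ℚ) ≠ 0 := by exact_mod_cast s.den_ne_zero
    have htsq : t^2 = (s.den:ℚ)^2 + (s.num:ℚ)^2 := by
      have hnum : (s.num : ℚ) = s * s.den := (div_eq_iff hden).mp (Rat.num_div_den s)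
      rw [ht, hnum, mul_pow, hrsq]; ring
    -- t is an integer
    have htden : t.den = 1 := by
      have h1 : (t * t).den = t.den * t.den := Rat.mul_self_den t
      have h2 : t * t = ((s.den:ℤ)^2 + s.num^2 : ℤ) := by
        push_cast; rw [← sq]; exact htsq
      have h3 : (t * t).den = 1 := by rw [h2]; exact Rat.den_intCast _
      have h4 : t.den * t.den = 1 := h1 ▸ h3
      exact Nat.eq_one_of_mul_eq_one_right h4
    have htint : (t.num : ℚ) = t := by
      conv_rhs => rw [← Rat.num_div_den t]
      rw [htden]; simp
    have htpos : 0 < t := by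
      have : (0:ℚ) < (s.den:ℚ) := by exact_mod_cast s.pos
      exact mul_pos hrpos this
    refine ⟨(s.den : ℤ), s.num, t.num, ?_, Rat.num_ne_zero.mpr hs0, Rat.num_pos.mpr htpos, ?_, ?_⟩
    · exact_mod_cast s.den_ne_zero
    · have : ((s.den:ℤ)^2 + s.num^2 : ℚ) = ((t.num)^2 : ℚ) := by
        push_cast
        rw [htint, htsq]
      exact_mod_cast this
    · rw [hs] at *
      have := (Rat.num_div_den (xi + xj)).symm
      push_cast
      exact this
  · rintro (h0 | ⟨α, β, γ, hα, hβ, hγ, hpy, hsv⟩)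
    · refine ⟨|d|, ?_⟩
      rw [h0]
      push_cast
      simp [Real.sqrt_sq_eq_abs]
    · refine ⟨|d * (γ / α)|, ?_⟩
      have hαQ : (α:ℚ) ≠ 0 := Int.cast_ne_zero.mpr hα
      have h1 : 1 + s^2 = ((γ:ℚ)/α)^2 := by
        rw [hsv]
        field_simp
        exact_mod_cast hpy
      have : (d:ℝ)^2 * (1 + (s:ℝ)^2) = ((d * (γ/α) : ℚ) : ℝ)^2 := by
        have : ((1:ℚ) + s^2 : ℚ) = ((γ:ℚ)/α)^2 := h1
        push_cast
        have h2 : (1:ℝ) + (s:ℝ)^2 = ((γ:ℝ)/α)^2 := by exact_mod_cast this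
        rw [h2]; ring
      rw [this, Real.sqrt_sq_eq_abs]
      push_cast
      ring_nf
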